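/- In any stable packing of the plane by circles whose radii are bounded between positive constants, if Λ is the instability and d is the (lower) density, then d ≥ π / (n·tan(Λ/2) + tan((2π − nΛ)/2)), where n = ⌊2π/Λ⌋. -/

import Mathlib

open MeasureTheory Real
open scoped ENNReal RealInnerProductSpace

noncomputable section StablePacking

abbrev E2 := EuclideanSpace ℝ (Fin 2)

/-- unit vector in direction θ -/
def uv (θ : ℝ) : E2 :=
  Real.cos θ • (EuclideanSpace.single (0 : Fin 2) (1:ℝ))
    + Real.sin θ • (EuclideanSpace.single (1 : Fin 2) (1:ℝ))

lemma uv_apply_zero (θ : ℝ) : uv θ 0 = Real.cos θ := by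
  simp [uv, EuclideanSpace.single_apply]

lemma uv_apply_one (θ : ℝ) : uv θ 1 = Real.sin θ := by
  simp [uv, EuclideanSpace.single_apply]

lemma continuous_uv : Continuous uv := by
  exact (Real.continuous_cos.smul continuous_const).add
    (Real.continuous_sin.smul continuous_const)

lemma inner_uv (θ φ : ℝ) : ⟪uv θ, uv φ⟫ = Real.cos (θ - φ) := by
  rw [PiLp.inner_apply]
  simp only [RCLike.inner_apply, starRingEnd_apply, star_trivial]
  rw [Fin.sum_univ_two, uv_apply_zero, uv_apply_one, uv_apply_zero, uv_apply_one,
    Real.cos_sub]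
  ring

lemma norm_uv (θ : ℝ) : ‖uv θ‖ = 1 := by
  have h : ⟪uv θ, uv θ⟫ = 1 := by rw [inner_uv]; simp
  have := real_inner_self_eq_norm_sq (uv θ)
  nlinarith [norm_nonneg (uv θ)]

lemma uv_period (θ : ℝ) : uv (θ + 2 * π) = uv θ := by
  simp [uv, Real.cos_add_two_pi, Real.sin_add_two_pi]

lemma uv_add_pi_div_two_apply_zero (θ : ℝ) : uv (θ + π/2) 0 = - Real.sin θ := by
  rw [uv_apply_zero, Real.cos_add_pi_div_two]

lemma uv_add_pi_div_two_apply_one (θ : ℝ) : uv (θ + π/2) 1 = Real.cos θ := by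
  rw [uv_apply_one, Real.sin_add_pi_div_two]

/-- decomposition of a direction w.r.t. an orthonormal frame at angle `φ` -/
lemma uv_decomp (φ ψ : ℝ) :
    uv (φ + ψ) = Real.cos ψ • uv φ + Real.sin ψ • uv (φ + π/2) := by
  refine PiLp.ext ?_
  rw [Fin.forall_fin_two]
  constructor
  · simp only [PiLp.add_apply, PiLp.smul_apply, smul_eq_mul]
    rw [uv_apply_zero, uv_apply_zero, uv_add_pi_div_two_apply_zero, Real.cos_add]
    ring
  · simp only [PiLp.add_apply, PiLp.smul_apply, smul_eq_mul]
    rw [uv_apply_one, uv_apply_one, uv_add_pi_div_two_apply_one, Real.sin_add]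
    ring

/-- every nonzero vector has a polar representation -/
lemma exists_polar (v : E2) (hv : v ≠ 0) : ∃ β : ℝ, v = ‖v‖ • uv β := by
  have hn : 0 < ‖v‖ := norm_pos_iff.mpr hv
  have hsq : (v 0)^2 + (v 1)^2 = ‖v‖^2 := by
    rw [← real_inner_self_eq_norm_sq, PiLp.inner_apply]
    simp only [RCLike.inner_apply, starRingEnd_apply, star_trivial]
    rw [Fin.sum_univ_two]; ring
  have h0 : |v 0 / ‖v‖| ≤ 1 := by
    rw [abs_div, abs_of_pos hn, div_le_one hn]
    nlinarith [abs_nonneg (v 0), sq_abs (v 0), sq_nonneg (v 1), abs_nonneg (v 1)]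
  set x := v 0 / ‖v‖ with hx
  have hx1 : -1 ≤ x := neg_le_of_abs_le h0
  have hx2 : x ≤ 1 := le_of_abs_le h0
  have hcos : Real.cos (Real.arccos x) = x := Real.cos_arccos hx1 hx2
  have hsin : Real.sin (Real.arccos x) = Real.sqrt (1 - x^2) := Real.sin_arccos x
  have hsqrt : Real.sqrt (1 - x^2) = |v 1| / ‖v‖ := by
    have : 1 - x^2 = (|v 1| / ‖v‖)^2 := by
      rw [hx]
      field_simp
      nlinarith [sq_abs (v 1)]
    rw [this, Real.sqrt_sq (by positivity)]
  by_cases hs : 0 ≤ v 1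
  · refine ⟨Real.arccos x, ?_⟩
    refine PiLp.ext ?_
    rw [Fin.forall_fin_two]
    constructor
    · simp only [PiLp.smul_apply, smul_eq_mul]
      rw [uv_apply_zero, hcos, hx]; field_simp
    · simp only [PiLp.smul_apply, smul_eq_mul]
      rw [uv_apply_one, hsin, hsqrt, abs_of_nonneg hs]; field_simp
  · refine ⟨-Real.arccos x, ?_⟩
    refine PiLp.ext ?_
    rw [Fin.forall_fin_two]
    constructor
    · simp only [PiLp.smul_apply, smul_eq_mul]
      rw [uv_apply_zero, Real.cos_neg, hcos, hx]; field_simp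
    · simp only [PiLp.smul_apply, smul_eq_mul]
      rw [uv_apply_one, Real.sin_neg, hsin, hsqrt, abs_of_neg (not_le.mp hs)]
      field_simp


section Part2
variable (c : ℕ → E2) (r : ℕ → ℝ) (r₀ R₀ : ℝ)

lemma centers_sep (hr₀ : 0 < r₀) (hr : ∀ i, r i ∈ Set.Icc r₀ R₀)
    (hpack : Pairwise fun i j => Disjoint (Metric.ball (c i) (r i)) (Metric.ball (c j) (r j)))
    {i j : ℕ} (hij : i ≠ j) : r i + r j ≤ dist (c i) (c j) := by
  by_contra hcon
  push_neg at hcon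
  have hri : 0 < r i := lt_of_lt_of_le hr₀ (hr i).1
  have hrj : 0 < r j := lt_of_lt_of_le hr₀ (hr j).1
  have hdisj := hpack hij
  set d := dist (c i) (c j) with hdd
  have hd0 : 0 ≤ d := dist_nonneg
  rcases lt_or_ge d (r j) with hd | hdj
  · exact Set.disjoint_left.mp hdisj (Metric.mem_ball_self hri)
      (by simpa [Metric.mem_ball] using hd)
  rcases lt_or_ge d (r i) with hd | hdi
  · exact Set.disjoint_left.mp hdisj
      (by simp only [Metric.mem_ball]; rw [dist_comm]; exact hd)
      (Metric.mem_ball_self hrj)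
  · have hdpos : 0 < d := lt_of_lt_of_le hrj hdj
    set s := (d + r i - r j)/2 with hs
    have hs0 : 0 < s := by rw [hs]; linarith
    have hsd : s ≤ d := by rw [hs]; linarith
    have hsri : s < r i := by rw [hs]; linarith
    have hdsrj : d - s < r j := by rw [hs]; linarith
    set w := c j - c i with hw
    have hnw : ‖w‖ = d := by rw [hw, norm_sub_rev, ← dist_eq_norm]
    set p := c i + (s/d) • w with hp
    have hp1 : dist p (c i) = s := by
      rw [dist_eq_norm]
      have : p - c i = (s/d) • w := by rw [hp]; abel
      rw [this, norm_smul, hnw, Real.norm_eq_abs, abs_of_pos (by positivity)]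
      field_simp
    have hp2 : dist p (c j) = d - s := by
      rw [dist_eq_norm]
      have : p - c j = (s/d - 1) • w := by
        rw [hp, hw, sub_smul, one_smul]; abel
      rw [this, norm_smul, hnw, Real.norm_eq_abs, abs_of_nonpos (by
        rw [sub_nonpos, div_le_one hdpos]; exact hsd)]
      have : -(s/d - 1) * d = d - s := by field_simp; ring
      rw [this]
    exact Set.disjoint_left.mp hdisj
      (by rw [Metric.mem_ball, hp1]; exact hsri)
      (by rw [Metric.mem_ball, hp2]; exact hdsrj)

lemma tangency (hr₀ : 0 < r₀) (hr : ∀ i, r i ∈ Set.Icc r₀ R₀)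
    (hpack : Pairwise fun i j => Disjoint (Metric.ball (c i) (r i)) (Metric.ball (c j) (r j)))
    {i j : ℕ} {θ : ℝ} (hij : j ≠ i) (hc : dist (c i + r i • uv θ) (c j) ≤ r j) :
    c j = c i + (r i + r j) • uv θ := by
  have hri : 0 < r i := lt_of_lt_of_le hr₀ (hr i).1
  have hrj : 0 < r j := lt_of_lt_of_le hr₀ (hr j).1
  set p := c i + r i • uv θ with hp
  have hcp : dist (c i) p = r i := by
    rw [dist_eq_norm]
    have : c i - p = -(r i • uv θ) := by rw [hp]; abel
    rw [this, norm_neg, norm_smul, norm_uv, Real.norm_eq_abs, abs_of_pos hri, mul_one]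
  have hsep : r i + r j ≤ dist (c i) (c j) :=
    centers_sep c r r₀ R₀ hr₀ hr hpack (Ne.symm hij)
  have htri : dist (c i) (c j) ≤ dist (c i) p + dist p (c j) := dist_triangle _ _ _
  have heq : dist (c i) (c j) = r i + r j := le_antisymm (by linarith) hsep
  have hpc : dist p (c j) = r j := by linarith
  -- equality in the triangle inequality
  have hnormadd : ‖(p - c i) + (c j - p)‖ = ‖p - c i‖ + ‖c j - p‖ := by
    have h1 : (p - c i) + (c j - p) = c j - c i := by abel
    have h2 : ‖p - c i‖ = r i := by rw [← dist_eq_norm, dist_comm]; exact hcp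
    have h3 : ‖c j - p‖ = r j := by rw [← dist_eq_norm, dist_comm]; exact hpc
    rw [h1, h2, h3, ← dist_eq_norm, dist_comm]
    exact heq
  have hray : SameRay ℝ (p - c i) (c j - p) := sameRay_iff_norm_add.mpr hnormadd
  have hpc0 : p - c i ≠ 0 := by
    intro h
    have : ‖p - c i‖ = 0 := by rw [h, norm_zero]
    rw [← dist_eq_norm, dist_comm] at this
    rw [hcp] at this; linarith
  obtain ⟨t, ht0, htt⟩ := hray.exists_nonneg_left hpc0
  have hpci : p - c i = r i • uv θ := by rw [hp]; abel
  have htnorm : t * r i = r j := by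
    have : ‖t • (p - c i)‖ = ‖c j - p‖ := by rw [htt]
    rw [norm_smul, hpci, norm_smul, norm_uv, mul_one, Real.norm_eq_abs,
      Real.norm_eq_abs, abs_of_nonneg ht0, abs_of_pos hri, ← dist_eq_norm, dist_comm,
      hpc] at this
    exact this
  have : c j = p + t • (p - c i) := by rw [htt]; abel
  rw [this, hpci, hp, smul_smul, add_smul]
  rw [show t * r i = r j from htnorm]
  abel

lemma descent {i j : ℕ} {x : E2} {θ : ℝ} (hcj : c j = c i + (r i + r j) • uv θ)
    (hpos : 0 < r i + r j) (hx : r i < ⟪x - c i, uv θ⟫) :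
    ‖x - c j‖^2 - (r j)^2 < ‖x - c i‖^2 - (r i)^2 := by
  have hxj : x - c j = (x - c i) - (r i + r j) • uv θ := by rw [hcj]; abel
  have hexp : ‖x - c j‖^2 = ‖x - c i‖^2 - 2 * ((r i + r j) * ⟪x - c i, uv θ⟫)
      + (r i + r j)^2 := by
    rw [hxj, @norm_sub_sq_real, real_inner_smul_right, norm_smul, Real.norm_eq_abs,
      abs_of_pos hpos, norm_uv, mul_one]
  nlinarith

lemma finite_centers (hr₀ : 0 < r₀) (hr : ∀ i, r i ∈ Set.Icc r₀ R₀)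
    (hpack : Pairwise fun i j => Disjoint (Metric.ball (c i) (r i)) (Metric.ball (c j) (r j)))
    (x : E2) (B : ℝ) : {i | c i ∈ Metric.closedBall x B}.Finite := by
  by_contra hinf
  have hinf : Set.Infinite {i | c i ∈ Metric.closedBall x B} := hinf
  have hsub : ∀ i : ℕ, Metric.ball (c i) r₀ ⊆ Metric.ball (c i) (r i) :=
    fun i => Metric.ball_subset_ball (hr i).1
  set I := {i | c i ∈ Metric.closedBall x B} with hI
  have hdisj : Pairwise (Function.onFun Disjoint (fun i : I => Metric.ball (c i) r₀)) := by
    intro a b hab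
    exact Set.disjoint_of_subset (hsub a) (hsub b)
      (hpack (by exact fun h => hab (Subtype.ext h)))
  have hmeas := MeasureTheory.measure_iUnion (μ := volume) hdisj
    (fun i : I => measurableSet_ball)
  have hval : ∀ i : I, volume (Metric.ball (c i) r₀) = volume (Metric.ball (0:E2) r₀) :=
    fun i => Measure.addHaar_ball_center volume (c i) r₀
  have htop : (∑' _ : I, volume (Metric.ball (0:E2) r₀)) = ⊤ := by
    have : Infinite I := hinf.to_subtype
    exact ENNReal.tsum_const_eq_top_of_ne_zero
      (ne_of_gt (Metric.measure_ball_pos volume 0 hr₀))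
  have hsum : volume (⋃ i : I, Metric.ball (c i) r₀) = ⊤ := by
    rw [hmeas]
    rw [tsum_congr hval, htop]
  have hb : (⋃ i : I, Metric.ball (c i) r₀) ⊆ Metric.closedBall x (B + r₀) := by
    rintro y ⟨s, ⟨i, rfl⟩, hy⟩
    simp only [Metric.mem_ball] at hy
    have hcix : dist (c i) x ≤ B := i.2
    have : dist y x ≤ dist y (c i) + dist (c i) x := dist_triangle _ _ _
    rw [Metric.mem_closedBall]
    linarith [le_of_lt hy]
  have := measure_mono (μ := volume) hb
  rw [hsum] at this
  exact absurd (lt_of_le_of_lt this (measure_closedBall_lt_top)) (by simp)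

lemma exists_min_pow (hr₀ : 0 < r₀) (hr : ∀ i, r i ∈ Set.Icc r₀ R₀)
    (hpack : Pairwise fun i j => Disjoint (Metric.ball (c i) (r i)) (Metric.ball (c j) (r j)))
    (x : E2) : ∃ i, ∀ j, ‖x - c i‖^2 - (r i)^2 ≤ ‖x - c j‖^2 - (r j)^2 := by
  set f : ℕ → ℝ := fun i => ‖x - c i‖^2 - (r i)^2 with hf
  set M := f 0 + R₀^2 with hM
  have hA : {j | f j ≤ f 0} ⊆ {j | c j ∈ Metric.closedBall x (Real.sqrt M)} := by
    intro j hj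
    simp only [Set.mem_setOf_eq] at hj ⊢
    have hrj : r j ≤ R₀ := (hr j).2
    have hrj0 : 0 < r j := lt_of_lt_of_le hr₀ (hr j).1
    have h1 : ‖x - c j‖^2 ≤ M := by
      have hj' : ‖x - c j‖^2 - r j^2 ≤ ‖x - c 0‖^2 - r 0^2 := hj
      have hM' : M = ‖x - c 0‖^2 - r 0^2 + R₀^2 := rfl
      rw [hM']; nlinarith
    have h2 : ‖x - c j‖ ≤ Real.sqrt M := by
      have := Real.sqrt_le_sqrt h1
      rwa [Real.sqrt_sq (norm_nonneg _)] at this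
    rw [Metric.mem_closedBall, dist_comm, dist_eq_norm]
    exact h2
  have hfin : {j | f j ≤ f 0}.Finite :=
    Set.Finite.subset (finite_centers c r r₀ R₀ hr₀ hr hpack x (Real.sqrt M)) hA
  obtain ⟨a, ha, hmin⟩ := Set.exists_min_image _ f hfin ⟨0, by simp⟩
  refine ⟨a, fun j => ?_⟩
  by_cases hj : f j ≤ f 0
  · exact hmin j hj
  · push_neg at hj
    exact le_trans (hmin 0 (by simp)) (le_of_lt hj)

end Part2
section Part3

lemma convexOn_tan_half : ConvexOn ℝ (Set.Ico 0 (π/2)) Real.tan := by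
  apply MonotoneOn.convexOn_of_deriv (convex_Ico 0 (π/2))
  · apply Real.continuousOn_tan.mono
    intro x hx
    simp only [Set.mem_setOf_eq]
    exact ne_of_gt (Real.cos_pos_of_mem_Ioo ⟨by
      have := hx.1; linarith [Real.pi_pos], hx.2⟩)
  · intro x hx
    rw [interior_Ico] at hx
    exact (Real.differentiableAt_tan.mpr (ne_of_gt (Real.cos_pos_of_mem_Ioo
      ⟨by linarith [hx.1, Real.pi_pos], hx.2⟩))).differentiableWithinAt
  · rw [interior_Ico]
    intro a ha b hb hab
    rw [Real.deriv_tan, Real.deriv_tan]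
    have hca : 0 < Real.cos a := Real.cos_pos_of_mem_Ioo ⟨by linarith [ha.1, Real.pi_pos], ha.2⟩
    have hcb : 0 < Real.cos b := Real.cos_pos_of_mem_Ioo ⟨by linarith [hb.1, Real.pi_pos], hb.2⟩
    have hle : Real.cos b ≤ Real.cos a :=
      Real.cos_le_cos_of_nonneg_of_le_pi (le_of_lt ha.1) (by linarith [hb.2, Real.pi_pos]) hab
    have h1 : Real.cos b ^ 2 ≤ Real.cos a ^ 2 := by nlinarith
    rw [div_le_div_iff₀ (by positivity) (by positivity)]
    nlinarith

variable {Λ : ℝ}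

lemma tan_superadd (hΛπ : Λ < π) {a b : ℝ} (ha : 0 ≤ a) (hb : 0 ≤ b) (hab : a + b ≤ Λ) :
    Real.tan (a/2) + Real.tan (b/2) ≤ Real.tan ((a+b)/2) := by
  rcases eq_or_lt_of_le (by linarith : (0:ℝ) ≤ a + b) with h0 | h0
  · have ha0 : a = 0 := by linarith
    have hb0 : b = 0 := by linarith
    simp [ha0, hb0]
  · set s := a + b with hs
    have hmem : s/2 ∈ Set.Ico 0 (π/2) := ⟨by positivity, by
      have : s < π := lt_of_le_of_lt hab hΛπ
      linarith⟩
    have hmem0 : (0:ℝ) ∈ Set.Ico 0 (π/2) := ⟨le_refl _, by positivity⟩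
    have key : ∀ t : ℝ, 0 ≤ t → t ≤ s → Real.tan (t/2) ≤ (t/s) * Real.tan (s/2) := by
      intro t ht hts
      have hts1 : t/s ≤ 1 := div_le_one_of_le₀ hts (le_of_lt h0)
      have hh := convexOn_tan_half.2 hmem0 hmem (by linarith : (0:ℝ) ≤ 1 - t/s)
        (by positivity : (0:ℝ) ≤ t/s) (by ring)
      simp only [smul_eq_mul, mul_zero, zero_add, Real.tan_zero] at hh
      have e : t/s * (s/2) = t/2 := by field_simp
      rw [e] at hh
      linarith [hh]
    have h1 := key a ha (by linarith)
    have h2 := key b hb (by linarith)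
    have hsum : a/s + b/s = 1 := by field_simp; rw [hs]
    calc Real.tan (a/2) + Real.tan (b/2) ≤ a/s * Real.tan (s/2) + b/s * Real.tan (s/2) :=
          add_le_add h1 h2
      _ = (a/s + b/s) * Real.tan (s/2) := by ring
      _ = Real.tan (s/2) := by rw [hsum, one_mul]

lemma tan_exchange (hΛ0 : 0 < Λ) (hΛπ : Λ < π) {a b : ℝ} (ha : 0 ≤ a) (hb : 0 ≤ b)
    (haΛ : a ≤ Λ) (hbΛ : b ≤ Λ) (hs : Λ ≤ a + b) :
    Real.tan (a/2) + Real.tan (b/2) ≤ Real.tan (Λ/2) + Real.tan ((a + b - Λ)/2) := by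
  set s := a + b with hsdef
  have hd0 : 0 ≤ 2*Λ - s := by linarith
  rcases eq_or_lt_of_le hd0 with h0 | h0
  · have haΛ' : a = Λ := by linarith
    have hbΛ' : b = Λ := by linarith
    rw [haΛ', hbΛ', hsdef, haΛ', hbΛ']
    have : Λ + Λ - Λ = Λ := by ring
    rw [this]
  · set α := (Λ - a)/(2*Λ - s) with hα
    have hα0 : 0 ≤ α := by apply div_nonneg <;> linarith
    have hα1 : α ≤ 1 := by rw [hα, div_le_one h0]; linarith
    have hx : (s - Λ)/2 ∈ Set.Ico 0 (π/2) := ⟨by linarith, by linarith⟩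
    have hy : Λ/2 ∈ Set.Ico 0 (π/2) := ⟨by linarith, by linarith⟩
    have h1 := convexOn_tan_half.2 hx hy hα0 (by linarith : (0:ℝ) ≤ 1 - α) (by ring)
    have h2 := convexOn_tan_half.2 hx hy (by linarith : (0:ℝ) ≤ 1 - α) hα0 (by ring)
    simp only [smul_eq_mul] at h1 h2
    have e1 : α * ((s - Λ)/2) + (1 - α) * (Λ/2) = a/2 := by
      have hαu : α * (2*Λ - s) = Λ - a := by rw [hα]; exact div_mul_cancel₀ _ h0.ne'
      linear_combination (-1/2 : ℝ) * hαu
    have e2 : (1 - α) * ((s - Λ)/2) + α * (Λ/2) = b/2 := by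
      have hαu : α * (2*Λ - s) = Λ - a := by rw [hα]; exact div_mul_cancel₀ _ h0.ne'
      linear_combination (1/2 : ℝ) * hαu + (1/2 : ℝ) * hsdef
    rw [e1] at h1
    rw [e2] at h2
    have := add_le_add h1 h2
    nlinarith [this]

end Part3
section Part4

lemma multiset_tan_bound (Λ : ℝ) (hΛ0 : 0 < Λ) (hΛπ : Λ < π) :
    ∀ (N : ℕ) (m : Multiset ℝ), (Multiset.filter (fun x => x < Λ) m).card = N →
    (∀ x ∈ m, 0 ≤ x ∧ x ≤ Λ) →
    (m.map (fun x => Real.tan (x/2))).sum ≤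
      (⌊m.sum / Λ⌋₊ : ℝ) * Real.tan (Λ/2) + Real.tan ((m.sum - (⌊m.sum/Λ⌋₊ : ℝ) * Λ)/2) := by
  classical
  have fcc : ∀ (x : ℝ) (s : Multiset ℝ), (Multiset.filter (fun y => y < Λ) (x ::ₘ s)).card
      = (if x < Λ then 1 else 0) + (Multiset.filter (fun y => y < Λ) s).card := by
    intro x s
    rw [Multiset.filter_cons]
    split_ifs with h
    · simp; omega
    · simp
  intro N
  induction N using Nat.strong_induction_on with
  | _ N IH =>
    intro m hcard hmem
    set f : ℝ → ℝ := fun x => Real.tan (x/2) with hf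
    by_cases h2 : 2 ≤ (Multiset.filter (fun x => x < Λ) m).card
    · -- inductive step : two elements strictly below Λ
      obtain ⟨a, haF⟩ := Multiset.exists_mem_of_ne_zero (by
        intro h
        rw [h] at h2
        simp at h2 : Multiset.filter (fun x => x < Λ) m ≠ 0)
      have hFea : (Multiset.filter (fun x => x < Λ) m).erase a ≠ 0 := by
        have hpos : 0 < ((Multiset.filter (fun x => x < Λ) m).erase a).card := by
          rw [Multiset.card_erase_of_mem haF, Nat.pred_eq_sub_one]
          omega
        exact Multiset.card_pos.mp hpos
      obtain ⟨b, hbF'⟩ := Multiset.exists_mem_of_ne_zero hFea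
      have hbF : b ∈ Multiset.filter (fun x => x < Λ) m := Multiset.mem_of_mem_erase hbF'
      have hma : a ∈ m := (Multiset.mem_filter.mp haF).1
      have haΛ : a < Λ := (Multiset.mem_filter.mp haF).2
      have hbΛ : b < Λ := (Multiset.mem_filter.mp hbF).2
      have hbm' : b ∈ m.erase a :=
        Multiset.mem_of_le (Multiset.erase_le_erase a (Multiset.filter_le _ m)) hbF'
      set m'' := (m.erase a).erase b with hm''
      have hdec : m = a ::ₘ b ::ₘ m'' := by
        rw [hm'', Multiset.cons_erase hbm', Multiset.cons_erase hma]
      have ha0 : 0 ≤ a := (hmem a hma).1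
      have hb0 : 0 ≤ b := (hmem b (Multiset.mem_of_le (Multiset.erase_le a m) hbm')).1
      have hm''le : m'' ≤ m := le_trans (Multiset.erase_le b _) (Multiset.erase_le a m)
      have hmem'' : ∀ x ∈ m'', 0 ≤ x ∧ x ≤ Λ := fun x hx => hmem x (Multiset.mem_of_le hm''le hx)
      have hcard'' : (Multiset.filter (fun x => x < Λ) m).card
          = 2 + (Multiset.filter (fun x => x < Λ) m'').card := by
        rw [hdec, fcc, fcc, if_pos haΛ, if_pos hbΛ]
        omega
      rcases le_or_gt (a + b) Λ with hab | hab
      · -- merge the two elements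
        set m' := (a + b) ::ₘ m'' with hm'
        have hmem' : ∀ x ∈ m', 0 ≤ x ∧ x ≤ Λ := by
          intro x hx
          rcases Multiset.mem_cons.mp hx with h | h
          · rw [h]; exact ⟨by linarith, hab⟩
          · exact hmem'' x h
        have hsum' : m'.sum = m.sum := by
          rw [hm', hdec]
          simp [Multiset.sum_cons]
          ring
        have hcard' : (Multiset.filter (fun x => x < Λ) m').card < N := by
          rw [← hcard, hcard'', hm', fcc]
          split_ifs <;> omega
        have hIH := IH _ hcard' m' rfl hmem'
        rw [hsum'] at hIH
        refine le_trans ?_ hIH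
        rw [hdec, hm']
        simp only [Multiset.map_cons, Multiset.sum_cons]
        have := tan_superadd hΛπ ha0 hb0 hab
        simp only [hf]
        linarith
      · -- exchange : replace a, b by Λ, a+b-Λ
        set m' := Λ ::ₘ (a + b - Λ) ::ₘ m'' with hm'
        have hmem' : ∀ x ∈ m', 0 ≤ x ∧ x ≤ Λ := by
          intro x hx
          rcases Multiset.mem_cons.mp hx with h | h
          · rw [h]; exact ⟨le_of_lt hΛ0, le_refl Λ⟩
          rcases Multiset.mem_cons.mp h with h' | h'
          · rw [h']; exact ⟨by linarith, by linarith⟩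
          · exact hmem'' x h'
        have hsum' : m'.sum = m.sum := by
          rw [hm', hdec]
          simp [Multiset.sum_cons]
          ring
        have hcard' : (Multiset.filter (fun x => x < Λ) m').card < N := by
          rw [← hcard, hcard'', hm', fcc, fcc, if_neg (lt_irrefl Λ),
            if_pos (by linarith : a + b - Λ < Λ)]
          omega
        have hIH := IH _ hcard' m' rfl hmem'
        rw [hsum'] at hIH
        refine le_trans ?_ hIH
        rw [hdec, hm']
        simp only [Multiset.map_cons, Multiset.sum_cons]
        have := tan_exchange hΛ0 hΛπ ha0 hb0 (le_of_lt haΛ) (le_of_lt hbΛ) (le_of_lt hab)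
        simp only [hf]
        linarith
    · -- base case : at most one element below Λ
      push_neg at h2
      set G := Multiset.filter (fun x => ¬ x < Λ) m with hG
      have hFG : Multiset.filter (fun x => x < Λ) m + G = m := Multiset.filter_add_not _ m
      have hGrep : G = Multiset.replicate G.card Λ := by
        rw [Multiset.eq_replicate_card]
        intro x hx
        have h1 := (Multiset.mem_filter.mp hx).2
        have h2 := (hmem x (Multiset.mem_filter.mp hx).1).2
        linarith [not_lt.mp h1]
      set k := G.card with hk
      have hGsum : G.sum = k * Λ := by
        rw [hGrep, Multiset.sum_replicate, nsmul_eq_mul]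
      have hGmap : (G.map f).sum = k * f Λ := by
        rw [hGrep, Multiset.map_replicate, Multiset.sum_replicate, nsmul_eq_mul]
      have hc01 : (Multiset.filter (fun x => x < Λ) m).card = 0
          ∨ (Multiset.filter (fun x => x < Λ) m).card = 1 := by omega
      rcases hc01 with h0 | h1
      · -- no element below Λ
        have hF0 : Multiset.filter (fun x => x < Λ) m = 0 := Multiset.card_eq_zero.mp h0
        have hmG : m = G := by rw [← hFG, hF0, zero_add]
        have hfloor : ⌊m.sum / Λ⌋₊ = k := by
          rw [hmG, hGsum, mul_div_cancel_right₀ _ (ne_of_gt hΛ0), Nat.floor_natCast]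
        rw [hfloor, hmG, hGmap, hGsum]
        have : ((k:ℝ) * Λ - k * Λ)/2 = 0 := by ring
        rw [this, Real.tan_zero]
        simp [hf]
      · -- exactly one element below Λ
        obtain ⟨x, hFx⟩ := Multiset.card_eq_one.mp h1
        have hxF : x ∈ Multiset.filter (fun y => y < Λ) m := by
          rw [hFx]; exact Multiset.mem_singleton_self x
        have hxm : x ∈ m := (Multiset.mem_filter.mp hxF).1
        have hxΛ : x < Λ := (Multiset.mem_filter.mp hxF).2
        have hx0 : 0 ≤ x := (hmem x hxm).1
        have hsum : m.sum = x + k * Λ := by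
          rw [← hFG, Multiset.sum_add, hFx, hGsum, Multiset.sum_singleton]
        have hfloor : ⌊m.sum / Λ⌋₊ = k := by
          rw [hsum]
          have heq : (x + k * Λ)/Λ = x/Λ + (k:ℝ) := by
            field_simp
          rw [heq]
          have h1' : (0:ℝ) ≤ x/Λ := by positivity
          rw [Nat.floor_add_natCast h1' k, Nat.floor_eq_zero.mpr ((div_lt_one hΛ0).mpr hxΛ),
            zero_add]
        have hmap : (m.map f).sum = f x + k * f Λ := by
          rw [← hFG, Multiset.map_add, Multiset.sum_add, hFx, hGmap,
            Multiset.map_singleton, Multiset.sum_singleton]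
        rw [hfloor, hmap, hsum]
        have : (x + k * Λ - k * Λ)/2 = x/2 := by ring
        rw [this]
        simp only [hf]
        linarith

end Part4
section Part5A

/-- the closed standard triangle in the plane -/
def D2 : Set E2 := {y | 0 ≤ y 0 ∧ 0 ≤ y 1 ∧ y 0 + y 1 ≤ 1}

/-- triangle with vertices 0, v, w -/
def Tri (v w : E2) : Set E2 :=
  {x | ∃ s t : ℝ, 0 ≤ s ∧ 0 ≤ t ∧ s + t ≤ 1 ∧ x = s • v + t • w}

lemma volume_D2 : volume D2 ≤ ENNReal.ofReal (1/2) := by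
  have hφ := EuclideanSpace.volume_preserving_symm_measurableEquiv_toLp (Fin 2)
  have hψ := MeasureTheory.volume_preserving_finTwoArrow ℝ
  set T : Set (ℝ × ℝ) := {p | 0 ≤ p.1 ∧ 0 ≤ p.2 ∧ p.1 + p.2 ≤ 1} with hT
  have hTmeas : MeasurableSet T := by
    apply MeasurableSet.inter
    · exact measurableSet_le measurable_const measurable_fst
    apply MeasurableSet.inter
    · exact measurableSet_le measurable_const measurable_snd
    · exact measurableSet_le (measurable_fst.add measurable_snd) measurable_const
  have hcomp := (hψ.comp hφ).measure_preimage hTmeas.nullMeasurableSet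
  have hD2 : D2 = (⇑(MeasurableEquiv.finTwoArrow) ∘ ⇑(MeasurableEquiv.toLp 2 (Fin 2 → ℝ)).symm) ⁻¹' T := by
    rfl
  rw [hD2, hcomp]
  -- now bound the volume of T in ℝ × ℝ
  have hvol : (volume : Measure (ℝ × ℝ)) = (volume : Measure ℝ).prod volume :=
    rfl
  rw [hvol, MeasureTheory.Measure.prod_apply hTmeas]
  have hslice : ∀ x : ℝ, volume (Prod.mk x ⁻¹' T)
      = Set.indicator (Set.Icc (0:ℝ) 1) (fun x => ENNReal.ofReal (1 - x)) x := by
    intro x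
    by_cases hx : x ∈ Set.Icc (0:ℝ) 1
    · have : Prod.mk x ⁻¹' T = Set.Icc 0 (1 - x) := by
        ext y
        simp only [hT, Set.mem_preimage, Set.mem_setOf_eq, Set.mem_Icc]
        constructor
        · rintro ⟨h1, h2, h3⟩; exact ⟨h2, by linarith⟩
        · rintro ⟨h1, h2⟩; exact ⟨hx.1, h1, by linarith⟩
      rw [this, Real.volume_Icc, Set.indicator_of_mem hx]
      congr 1
      ring
    · have : Prod.mk x ⁻¹' T = ∅ := by
        ext y
        simp only [hT, Set.mem_preimage, Set.mem_setOf_eq, Set.mem_empty_iff_false,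
          iff_false]
        rintro ⟨h1, h2, h3⟩
        rw [Set.mem_Icc] at hx
        push_neg at hx
        rcases lt_or_ge x 0 with h | h
        · linarith
        · linarith [hx h]
      rw [this, measure_empty, Set.indicator_of_notMem hx]
  rw [lintegral_congr hslice, MeasureTheory.lintegral_indicator measurableSet_Icc]
  rw [← MeasureTheory.ofReal_integral_eq_lintegral_ofReal]
  · apply ENNReal.ofReal_le_ofReal
    rw [MeasureTheory.integral_Icc_eq_integral_Ioc, ← intervalIntegral.integral_of_le
      (by norm_num : (0:ℝ) ≤ 1)]
    rw [intervalIntegral.integral_sub (intervalIntegrable_const (c := 1))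
      (intervalIntegral.intervalIntegrable_id)]
    simp [integral_id]
    norm_num
  · apply ContinuousOn.integrableOn_compact isCompact_Icc
    exact (continuous_const.sub continuous_id).continuousOn
  · filter_upwards [MeasureTheory.ae_restrict_mem measurableSet_Icc] with x hx
    simp only [Pi.zero_apply]
    linarith [hx.2]

/-- the linear map sending `e₀ ↦ v`, `e₁ ↦ w` -/
def Gmap (v w : E2) : E2 →ₗ[ℝ] E2 where
  toFun y := y 0 • v + y 1 • w
  map_add' y z := by
    simp only [PiLp.add_apply, add_smul]
    abel
  map_smul' a y := by
    simp only [PiLp.smul_apply, smul_eq_mul, RingHom.id_apply, smul_add, ← smul_smul]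

lemma Gmap_det (v w : E2) : LinearMap.det (Gmap v w) = v 0 * w 1 - v 1 * w 0 := by
  classical
  set b := (EuclideanSpace.basisFun (Fin 2) ℝ).toBasis with hb
  rw [← LinearMap.det_toMatrix b]
  have h00 : LinearMap.toMatrix b b (Gmap v w) 0 0 = v 0 := by
    rw [LinearMap.toMatrix_apply]
    simp [Gmap, hb, EuclideanSpace.basisFun_apply, EuclideanSpace.single_apply]
  have h10 : LinearMap.toMatrix b b (Gmap v w) 1 0 = v 1 := by
    rw [LinearMap.toMatrix_apply]
    simp [Gmap, hb, EuclideanSpace.basisFun_apply, EuclideanSpace.single_apply]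
  have h01 : LinearMap.toMatrix b b (Gmap v w) 0 1 = w 0 := by
    rw [LinearMap.toMatrix_apply]
    simp [Gmap, hb, EuclideanSpace.basisFun_apply, EuclideanSpace.single_apply]
  have h11 : LinearMap.toMatrix b b (Gmap v w) 1 1 = w 1 := by
    rw [LinearMap.toMatrix_apply]
    simp [Gmap, hb, EuclideanSpace.basisFun_apply, EuclideanSpace.single_apply]
  rw [Matrix.det_fin_two, h00, h01, h10, h11]
  ring

lemma Tri_eq_image (v w : E2) : Tri v w = (Gmap v w) '' D2 := by
  ext x
  constructor
  · rintro ⟨s, t, hs, ht, hst, rfl⟩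
    refine ⟨(EuclideanSpace.equiv (Fin 2) ℝ).symm ![s, t], ⟨?_, ?_, ?_⟩, ?_⟩
    · simpa using hs
    · simpa using ht
    · simpa using hst
    · simp [Gmap]
  · rintro ⟨y, ⟨h0, h1, h01⟩, rfl⟩
    exact ⟨y 0, y 1, h0, h1, h01, rfl⟩

lemma isCompact_D2 : IsCompact D2 := by
  have hclosed : IsClosed D2 := by
    have h0 : Continuous fun y : E2 => y 0 := by
      exact (continuous_apply (0 : Fin 2)).comp (PiLp.continuous_ofLp (p := 2) (β := fun _ : Fin 2 => ℝ))
    have h1 : Continuous fun y : E2 => y 1 := by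
      exact (continuous_apply (1 : Fin 2)).comp (PiLp.continuous_ofLp (p := 2) (β := fun _ : Fin 2 => ℝ))
    exact (isClosed_le continuous_const h0).inter
      ((isClosed_le continuous_const h1).inter (isClosed_le (h0.add h1) continuous_const))
  apply Metric.isCompact_of_isClosed_isBounded hclosed
  rw [Metric.isBounded_iff_subset_closedBall 0]
  refine ⟨2, fun y hy => ?_⟩
  obtain ⟨h0, h1, h01⟩ := hy
  rw [Metric.mem_closedBall, dist_zero_right]
  have : ‖y‖ ^ 2 = y 0 ^ 2 + y 1 ^ 2 := by
    rw [← real_inner_self_eq_norm_sq, PiLp.inner_apply]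
    simp only [RCLike.inner_apply, starRingEnd_apply, star_trivial]
    rw [Fin.sum_univ_two]; ring
  nlinarith [norm_nonneg y]

lemma Tri_measurable (v w : E2) : MeasurableSet (Tri v w) := by
  rw [Tri_eq_image]
  exact (isCompact_D2.image (Gmap v w).continuous_of_finiteDimensional).measurableSet

lemma Tri_volume (v w : E2) :
    volume (Tri v w) ≤ ENNReal.ofReal (|v 0 * w 1 - v 1 * w 0| / 2) := by
  rw [Tri_eq_image, MeasureTheory.Measure.addHaar_image_linearMap, Gmap_det]
  calc ENNReal.ofReal |v 0 * w 1 - v 1 * w 0| * volume D2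
      ≤ ENNReal.ofReal |v 0 * w 1 - v 1 * w 0| * ENNReal.ofReal (1/2) :=
        mul_le_mul_right volume_D2 _
    _ = ENNReal.ofReal (|v 0 * w 1 - v 1 * w 0| / 2) := by
        rw [← ENNReal.ofReal_mul (abs_nonneg _)]
        congr 1
        ring

lemma Tri_subset_ball (v w : E2) : Tri v w ⊆ Metric.closedBall 0 (max ‖v‖ ‖w‖) := by
  rintro x ⟨s, t, hs, ht, hst, rfl⟩
  rw [Metric.mem_closedBall, dist_zero_right]
  calc ‖s • v + t • w‖ ≤ ‖s • v‖ + ‖t • w‖ := norm_add_le _ _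
    _ = s * ‖v‖ + t * ‖w‖ := by
        rw [norm_smul, norm_smul, Real.norm_eq_abs, Real.norm_eq_abs,
          abs_of_nonneg hs, abs_of_nonneg ht]
    _ ≤ s * max ‖v‖ ‖w‖ + t * max ‖v‖ ‖w‖ := by
        have h1 : ‖v‖ ≤ max ‖v‖ ‖w‖ := le_max_left _ _
        have h2 : ‖w‖ ≤ max ‖v‖ ‖w‖ := le_max_right _ _
        have h3 : (0:ℝ) ≤ max ‖v‖ ‖w‖ := le_trans (norm_nonneg v) h1
        nlinarith
    _ ≤ max ‖v‖ ‖w‖ := by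
        have h3 : (0:ℝ) ≤ max ‖v‖ ‖w‖ := le_trans (norm_nonneg v) (le_max_left _ _)
        nlinarith

end Part5A
section Part5B

set_option maxHeartbeats 1000000 in
lemma wedge_subset {r : ℝ} (hr : 0 < r) {a b : ℝ} (hab : a ≤ b) (hlt : b - a < π)
    {x : E2} {ρ β : ℝ} (hρ : 0 ≤ ρ) (hβ1 : a ≤ β) (hβ2 : β ≤ b) (hx : x = ρ • uv β)
    (hca : ⟪x, uv a⟫ ≤ r) (hcb : ⟪x, uv b⟫ ≤ r) :
    x ∈ Tri ((r / Real.cos ((b-a)/2)) • uv ((a+b)/2)) (r • uv b)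
    ∨ x ∈ Tri ((r / Real.cos ((b-a)/2)) • uv ((a+b)/2)) (r • uv a) := by
  obtain ⟨γ, hγ⟩ : ∃ γ, γ = (b - a)/2 := ⟨_, rfl⟩
  obtain ⟨mid, hmid⟩ : ∃ mid, mid = (a + b)/2 := ⟨_, rfl⟩
  obtain ⟨d, hd⟩ : ∃ d, d = β - mid := ⟨_, rfl⟩
  rw [show (b - a)/2 = γ from hγ.symm, show (a + b)/2 = mid from hmid.symm]
  have hγ0 : 0 ≤ γ := by rw [hγ]; linarith
  have hγπ : γ < π/2 := by rw [hγ]; linarith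
  have hcosγ : 0 < Real.cos γ := Real.cos_pos_of_mem_Ioo ⟨by linarith [Real.pi_pos], hγπ⟩
  have hrne : r ≠ 0 := ne_of_gt hr
  have hcne : Real.cos γ ≠ 0 := ne_of_gt hcosγ
  have hdγ1 : -γ ≤ d := by rw [hd, hγ, hmid]; linarith
  have hdγ2 : d ≤ γ := by rw [hd, hγ, hmid]; linarith
  have hca' : ρ * Real.cos (d + γ) ≤ r := by
    rw [hx, real_inner_smul_left, inner_uv] at hca
    have : β - a = d + γ := by rw [hd, hγ, hmid]; ring
    rwa [this] at hca
  have hcb' : ρ * Real.cos (d - γ) ≤ r := by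
    rw [hx, real_inner_smul_left, inner_uv] at hcb
    have : β - b = d - γ := by rw [hd, hγ, hmid]; ring
    rwa [this] at hcb
  have hca'' : ρ * (Real.cos d * Real.cos γ) - ρ * (Real.sin d * Real.sin γ) ≤ r := by
    rw [Real.cos_add] at hca'; linarith [hca']
  have hcb'' : ρ * (Real.cos d * Real.cos γ) + ρ * (Real.sin d * Real.sin γ) ≤ r := by
    rw [Real.cos_sub] at hcb'; linarith [hcb']
  have hpyth := Real.sin_sq_add_cos_sq γ
  have hxβ : x = (ρ * Real.cos d) • uv mid + (ρ * Real.sin d) • uv (mid + π/2) := by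
    rw [hx, show β = mid + d by rw [hd]; ring, uv_decomp, smul_add, smul_smul, smul_smul]
  have hub : uv b = Real.cos γ • uv mid + Real.sin γ • uv (mid + π/2) := by
    rw [show b = mid + γ by rw [hγ, hmid]; ring, uv_decomp]
  have hua : uv a = Real.cos γ • uv mid + (-Real.sin γ) • uv (mid + π/2) := by
    rw [show a = mid + (-γ) by rw [hγ, hmid]; ring, uv_decomp, Real.cos_neg, Real.sin_neg,
      neg_smul, ← neg_smul]
  rcases eq_or_lt_of_le hγ0 with hγeq | hγpos
  · -- degenerate wedge
    left
    have hd0 : d = 0 := by linarith [hdγ1, hdγ2, hγeq]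
    refine ⟨ρ * Real.cos γ / r, 0, by positivity, le_refl _, ?_, ?_⟩
    · rw [add_zero, div_le_one hr]
      have h1 : ρ * Real.cos (d + γ) = ρ * Real.cos γ := by rw [hd0, zero_add]
      linarith [hca', h1]
    · rw [hxβ, hd0]
      simp only [Real.cos_zero, Real.sin_zero, mul_zero, mul_one, zero_smul, add_zero,
        zero_add, smul_smul]
      congr 1
      field_simp
      simp
  · have hsinγ : 0 < Real.sin γ := Real.sin_pos_of_pos_of_lt_pi hγpos (by linarith [Real.pi_pos])
    have hsne : Real.sin γ ≠ 0 := ne_of_gt hsinγ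
    rcases le_or_gt 0 d with hd0 | hd0
    · -- upper half : triangle with vertex r • uv b
      obtain ⟨t, ht⟩ : ∃ t, t = ρ * Real.sin d / (r * Real.sin γ) := ⟨_, rfl⟩
      obtain ⟨s, hs⟩ : ∃ s, s = (ρ * Real.cos d - t * (r * Real.cos γ)) * Real.cos γ / r :=
        ⟨_, rfl⟩
      have hsind : 0 ≤ Real.sin d :=
        Real.sin_nonneg_of_nonneg_of_le_pi hd0 (by linarith [Real.pi_pos])
      have ht0 : 0 ≤ t := by rw [ht]; positivity
      have htu : t * r = ρ * Real.sin d / Real.sin γ := by rw [ht]; field_simp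
      have husin : (t * r) * Real.sin γ = ρ * Real.sin d := by rw [htu]; field_simp
      have husin2 : (t * r) * Real.sin γ ^ 2 = ρ * Real.sin d * Real.sin γ := by
        rw [sq, ← mul_assoc, husin]
      have hkey : t * r - (t * r) * Real.cos γ ^ 2 = (t * r) * Real.sin γ ^ 2 := by
        linear_combination (-(t * r)) * hpyth
      have hsr : s * r = (ρ * Real.cos d - (t * r) * Real.cos γ) * Real.cos γ := by
        rw [hs, div_mul_cancel₀ _ hrne]; ring
      have hsinsub : 0 ≤ Real.sin (γ - d) :=
        Real.sin_nonneg_of_nonneg_of_le_pi (by linarith) (by linarith [Real.pi_pos])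
      have hsinsub' : 0 ≤ Real.sin γ * Real.cos d - Real.cos γ * Real.sin d := by
        rw [Real.sin_sub] at hsinsub; linarith
      have hs0 : 0 ≤ s := by
        have h1 : 0 ≤ s * r := by
          rw [hsr]
          apply mul_nonneg _ (le_of_lt hcosγ)
          nlinarith [husin, mul_nonneg hρ hsinsub']
        nlinarith [h1]
      have hst : s + t ≤ 1 := by
        have h2 : (s + t) * r ≤ 1 * r := by
          nlinarith [hsr, husin2, hkey, hcb'']
        exact le_of_mul_le_mul_right h2 hr
      refine Or.inl ⟨s, t, hs0, ht0, hst, ?_⟩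
      have e1 : s * (r / Real.cos γ) + t * (r * Real.cos γ) = ρ * Real.cos d := by
        have h1 : s * (r / Real.cos γ) = s * r / Real.cos γ := by ring
        rw [h1, hsr, mul_div_cancel_right₀ _ hcne]
        ring
      calc x = (ρ * Real.cos d) • uv mid + (ρ * Real.sin d) • uv (mid + π/2) := hxβ
        _ = (s * (r / Real.cos γ) + t * (r * Real.cos γ)) • uv mid
            + ((t * r) * Real.sin γ) • uv (mid + π/2) := by rw [e1, husin]
        _ = s • ((r / Real.cos γ) • uv mid) + t • (r • uv b) := by
            rw [hub]; module
    · -- lower half : triangle with vertex r • uv a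
      obtain ⟨t, ht⟩ : ∃ t, t = -(ρ * Real.sin d) / (r * Real.sin γ) := ⟨_, rfl⟩
      obtain ⟨s, hs⟩ : ∃ s, s = (ρ * Real.cos d - t * (r * Real.cos γ)) * Real.cos γ / r :=
        ⟨_, rfl⟩
      have hsind : Real.sin d ≤ 0 := by
        have h := Real.sin_nonneg_of_nonneg_of_le_pi (by linarith : 0 ≤ -d)
          (by linarith [Real.pi_pos])
        rw [Real.sin_neg] at h; linarith
      have ht0 : 0 ≤ t := by
        rw [ht]
        apply div_nonneg _ (by positivity)
        nlinarith [mul_nonneg hρ (neg_nonneg.mpr hsind)]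
      have htu : t * r = -(ρ * Real.sin d) / Real.sin γ := by rw [ht]; field_simp
      have husin : (t * r) * Real.sin γ = -(ρ * Real.sin d) := by rw [htu]; field_simp
      have husin2 : (t * r) * Real.sin γ ^ 2 = -(ρ * Real.sin d) * Real.sin γ := by
        rw [sq, ← mul_assoc, husin]
      have hkey : t * r - (t * r) * Real.cos γ ^ 2 = (t * r) * Real.sin γ ^ 2 := by
        linear_combination (-(t * r)) * hpyth
      have hsr : s * r = (ρ * Real.cos d - (t * r) * Real.cos γ) * Real.cos γ := by
        rw [hs, div_mul_cancel₀ _ hrne]; ring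
      have hsinsub : 0 ≤ Real.sin (γ + d) :=
        Real.sin_nonneg_of_nonneg_of_le_pi (by linarith) (by linarith [Real.pi_pos])
      have hsinsub' : 0 ≤ Real.sin γ * Real.cos d + Real.cos γ * Real.sin d := by
        rw [Real.sin_add] at hsinsub; linarith
      have hs0 : 0 ≤ s := by
        have h1 : 0 ≤ s * r := by
          rw [hsr]
          apply mul_nonneg _ (le_of_lt hcosγ)
          nlinarith [husin, mul_nonneg hρ hsinsub']
        nlinarith [h1]
      have hst : s + t ≤ 1 := by
        have h2 : (s + t) * r ≤ 1 * r := by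
          nlinarith [hsr, husin2, hkey, hca'']
        exact le_of_mul_le_mul_right h2 hr
      refine Or.inr ⟨s, t, hs0, ht0, hst, ?_⟩
      have e1 : s * (r / Real.cos γ) + t * (r * Real.cos γ) = ρ * Real.cos d := by
        have h1 : s * (r / Real.cos γ) = s * r / Real.cos γ := by ring
        rw [h1, hsr, mul_div_cancel_right₀ _ hcne]
        ring
      have e2 : (t * r) * (-Real.sin γ) = ρ * Real.sin d := by
        have := husin
        linarith [husin]
      calc x = (ρ * Real.cos d) • uv mid + (ρ * Real.sin d) • uv (mid + π/2) := hxβ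
        _ = (s * (r / Real.cos γ) + t * (r * Real.cos γ)) • uv mid
            + ((t * r) * (-Real.sin γ)) • uv (mid + π/2) := by rw [e1, e2]
        _ = s • ((r / Real.cos γ) • uv mid) + t • (r • uv a) := by
            rw [hua]; module

end Part5B
section Part5C

lemma tan_nonneg' {x : ℝ} (h0 : 0 ≤ x) (hx : x < π/2) : 0 ≤ Real.tan x := by
  rw [Real.tan_eq_sin_div_cos]
  apply div_nonneg
  · exact Real.sin_nonneg_of_nonneg_of_le_pi h0 (by linarith [Real.pi_pos])
  · exact le_of_lt (Real.cos_pos_of_mem_Ioo ⟨by linarith [Real.pi_pos], hx⟩)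

lemma wedge_vol (ri a b : ℝ) (hri : 0 ≤ ri) (hab : a ≤ b) (hba : b - a < π) :
    volume (Tri ((ri / Real.cos ((b-a)/2)) • uv ((a+b)/2)) (ri • uv b))
      ≤ ENNReal.ofReal (ri^2 * Real.tan ((b-a)/2) / 2)
    ∧ volume (Tri ((ri / Real.cos ((b-a)/2)) • uv ((a+b)/2)) (ri • uv a))
      ≤ ENNReal.ofReal (ri^2 * Real.tan ((b-a)/2) / 2) := by
  obtain ⟨γ, hγ⟩ : ∃ γ, γ = (b - a)/2 := ⟨_, rfl⟩
  obtain ⟨mid, hmid⟩ : ∃ mid, mid = (a + b)/2 := ⟨_, rfl⟩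
  rw [show (b - a)/2 = γ from hγ.symm, show (a + b)/2 = mid from hmid.symm]
  have hγ0 : 0 ≤ γ := by rw [hγ]; linarith
  have hγπ : γ < π/2 := by rw [hγ]; linarith
  have hcosγ : 0 < Real.cos γ := Real.cos_pos_of_mem_Ioo ⟨by linarith [Real.pi_pos], hγπ⟩
  have hsinγ : 0 ≤ Real.sin γ :=
    Real.sin_nonneg_of_nonneg_of_le_pi hγ0 (by linarith [Real.pi_pos])
  set v : E2 := (ri / Real.cos γ) • uv mid with hv
  set w : E2 := ri • uv b with hw
  set w' : E2 := ri • uv a with hw'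
  have hv0 : v 0 = (ri / Real.cos γ) * Real.cos mid := by
    rw [hv, PiLp.smul_apply, uv_apply_zero, smul_eq_mul]
  have hv1 : v 1 = (ri / Real.cos γ) * Real.sin mid := by
    rw [hv, PiLp.smul_apply, uv_apply_one, smul_eq_mul]
  have hw0 : w 0 = ri * Real.cos b := by
    rw [hw, PiLp.smul_apply, uv_apply_zero, smul_eq_mul]
  have hw1 : w 1 = ri * Real.sin b := by
    rw [hw, PiLp.smul_apply, uv_apply_one, smul_eq_mul]
  have hw'0 : w' 0 = ri * Real.cos a := by
    rw [hw', PiLp.smul_apply, uv_apply_zero, smul_eq_mul]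
  have hw'1 : w' 1 = ri * Real.sin a := by
    rw [hw', PiLp.smul_apply, uv_apply_one, smul_eq_mul]
  have hcross : v 0 * w 1 - v 1 * w 0 = ri^2 / Real.cos γ * Real.sin (b - mid) := by
    rw [hv0, hv1, hw0, hw1, Real.sin_sub]
    ring
  have hcross' : v 0 * w' 1 - v 1 * w' 0 = ri^2 / Real.cos γ * Real.sin (a - mid) := by
    rw [hv0, hv1, hw'0, hw'1, Real.sin_sub]
    ring
  have hbmid : b - mid = γ := by rw [hmid, hγ]; ring
  have hamid : a - mid = -γ := by rw [hmid, hγ]; ring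
  have habs : |v 0 * w 1 - v 1 * w 0| = ri^2 * Real.tan γ := by
    rw [hcross, hbmid, abs_of_nonneg (by positivity), Real.tan_eq_sin_div_cos]
    ring
  have habs' : |v 0 * w' 1 - v 1 * w' 0| = ri^2 * Real.tan γ := by
    rw [hcross', hamid, Real.sin_neg, abs_of_nonpos (by
      apply mul_nonpos_of_nonneg_of_nonpos (by positivity)
      simp [hsinγ])]
    rw [Real.tan_eq_sin_div_cos]
    ring
  constructor
  · refine le_trans (Tri_volume v w) ?_
    rw [habs]
  · refine le_trans (Tri_volume v w') ?_
    rw [habs']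

end Part5C
section Part5D

variable (c : ℕ → E2) (r : ℕ → ℝ) (r₀ R₀ : ℝ)

lemma dist_center_pt (i : ℕ) (θ : ℝ) (h : 0 ≤ r i) : dist (c i) (c i + r i • uv θ) = r i := by
  rw [dist_eq_norm]
  have : c i - (c i + r i • uv θ) = -(r i • uv θ) := by abel
  rw [this, norm_neg, norm_smul, norm_uv, Real.norm_eq_abs, abs_of_nonneg h, mul_one]

set_option maxHeartbeats 3000000 in
lemma disk_cover (hr₀ : 0 < r₀) (hr : ∀ i, r i ∈ Set.Icc r₀ R₀)
    (hpack : Pairwise fun i j => Disjoint (Metric.ball (c i) (r i)) (Metric.ball (c j) (r j)))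
    (Λ : ℝ) (hΛ0 : 0 < Λ) (hΛπ : Λ < π) (i : ℕ)
    (hstab' : ∀ α : ℝ, ∀ ε > 0, ∃ θ ∈ Set.Icc α (α + Λ + ε),
       ∃ j, j ≠ i ∧ dist (c i + r i • uv θ) (c j) ≤ r j) :
    ∃ QT : Set E2, MeasurableSet QT ∧
      QT ⊆ Metric.closedBall (c i) (r i / Real.cos (Λ/2)) ∧
      volume QT ≤ ENNReal.ofReal (((⌊2*π/Λ⌋₊ : ℝ) * Real.tan (Λ/2)
        + Real.tan ((2*π - (⌊2*π/Λ⌋₊ : ℝ)*Λ)/2)) * r i ^ 2) ∧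
      ∀ x : E2, (∀ θ : ℝ, (∃ j, j ≠ i ∧ dist (c i + r i • uv θ) (c j) ≤ r j) →
        ⟪x - c i, uv θ⟫ ≤ r i) → x ∈ QT := by
  classical
  have hri : 0 < r i := lt_of_lt_of_le hr₀ (hr i).1
  set S : Set ℝ := {θ | ∃ j, j ≠ i ∧ dist (c i + r i • uv θ) (c j) ≤ r j} with hS
  -- S is closed
  have hSclosed : IsClosed S := by
    have hJfin : {j | c j ∈ Metric.closedBall (c i) (r i + R₀)}.Finite :=
      finite_centers c r r₀ R₀ hr₀ hr hpack (c i) (r i + R₀)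
    have hSeq : S = ⋃ j ∈ {j | c j ∈ Metric.closedBall (c i) (r i + R₀)} ∩ {j | j ≠ i},
        {θ | dist (c i + r i • uv θ) (c j) ≤ r j} := by
      ext θ
      simp only [hS, Set.mem_setOf_eq, Set.mem_iUnion, Set.mem_inter_iff]
      constructor
      · rintro ⟨j, hj, hd⟩
        refine ⟨j, ⟨?_, hj⟩, hd⟩
        show dist (c j) (c i) ≤ r i + R₀
        calc dist (c j) (c i) ≤ dist (c j) (c i + r i • uv θ) + dist (c i + r i • uv θ) (c i) :=
              dist_triangle _ _ _
          _ ≤ r j + r i := by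
              rw [dist_comm (c i + r i • uv θ) (c i), dist_center_pt c r i θ (le_of_lt hri)]
              have := hd; rw [dist_comm] at this; linarith
          _ ≤ r i + R₀ := by linarith [(hr j).2]
      · rintro ⟨j, ⟨_, hj⟩, hd⟩
        exact ⟨j, hj, hd⟩
    rw [hSeq]
    apply Set.Finite.isClosed_biUnion (Set.Finite.inter_of_left hJfin _)
    intro j _
    have hcont : Continuous fun θ => dist (c i + r i • uv θ) (c j) :=
      (continuous_const.add (continuous_uv.const_smul (r i))).dist continuous_const
    exact isClosed_le hcont continuous_const
  -- S is (one-step) periodic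
  have hper : ∀ θ, θ ∈ S → θ + 2*π ∈ S := by
    intro θ hθ
    rw [hS, Set.mem_setOf_eq] at hθ ⊢
    rwa [uv_period]
  -- S meets every closed interval of length Λ
  have hhit : ∀ α : ℝ, ∃ θ ∈ Set.Icc α (α + Λ), θ ∈ S := by
    intro α
    by_contra hno
    push_neg at hno
    have hclos : α + Λ ∈ closure S := by
      rw [Metric.mem_closure_iff]
      intro ε hε
      obtain ⟨θ, hθmem, hθS⟩ := hstab' α (ε/2) (half_pos hε)
      have hθS' : θ ∈ S := hθS
      have hgt : α + Λ < θ := by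
        by_contra hle
        push_neg at hle
        exact hno θ ⟨hθmem.1, hle⟩ hθS'
      refine ⟨θ, hθS', ?_⟩
      rw [Real.dist_eq, abs_of_nonpos (by linarith)]
      have := hθmem.2
      linarith
    rw [hSclosed.closure_eq] at hclos
    exact hno (α + Λ) ⟨by linarith, le_refl _⟩ hclos
  -- the chain of contact angles
  obtain ⟨t, ht0def, htsucc⟩ : ∃ t : ℕ → ℝ, t 0 = sSup (S ∩ Set.Icc 0 Λ) ∧
      ∀ k, t (k+1) = sSup (S ∩ Set.Icc (t k) (t k + Λ)) :=
    ⟨fun k => Nat.rec (sSup (S ∩ Set.Icc 0 Λ)) (fun _ p => sSup (S ∩ Set.Icc p (p + Λ))) k,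
      rfl, fun k => rfl⟩
  have hsupmem : ∀ u v : ℝ, (∃ θ ∈ Set.Icc u v, θ ∈ S) →
      sSup (S ∩ Set.Icc u v) ∈ S ∩ Set.Icc u v := by
    intro u v hne
    apply IsClosed.csSup_mem (hSclosed.inter isClosed_Icc)
    · obtain ⟨θ, h1, h2⟩ := hne
      exact ⟨θ, h2, h1⟩
    · exact BddAbove.mono Set.inter_subset_right bddAbove_Icc
  have ht0mem : t 0 ∈ S ∩ Set.Icc 0 Λ := by
    have h := hhit 0
    rw [zero_add] at h
    rw [ht0def]
    exact hsupmem 0 Λ h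
  have htS : ∀ k, t k ∈ S := by
    intro k
    induction k with
    | zero => exact ht0mem.1
    | succ k ih =>
      rw [htsucc k]
      exact (hsupmem _ _ ⟨t k, ⟨le_refl _, by linarith⟩, ih⟩).1
  have htstep : ∀ k, t k ≤ t (k+1) ∧ t (k+1) ≤ t k + Λ := by
    intro k
    have h := (hsupmem (t k) (t k + Λ) ⟨t k, ⟨le_refl _, by linarith⟩, htS k⟩).2
    rw [← htsucc k] at h
    exact h
  -- two-step progress
  have htwo : ∀ k, t k + Λ ≤ t (k + 2) := by
    intro k
    have hempty1 : S ∩ Set.Ioc (t (k+1)) (t k + Λ) = ∅ := by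
      rw [Set.eq_empty_iff_forall_notMem]
      rintro s ⟨hsS, hs1, hs2⟩
      have hle : s ≤ t (k+1) := by
        rw [htsucc k]
        apply le_csSup (BddAbove.mono Set.inter_subset_right bddAbove_Icc)
        exact ⟨hsS, le_trans (htstep k).1 (le_of_lt hs1), hs2⟩
      linarith
    have hclaim : ∃ s ∈ S, t k + Λ ≤ s ∧ s ≤ t (k+1) + Λ := by
      by_contra hno
      push_neg at hno
      have hempty2 : S ∩ Set.Ioc (t (k+1)) (t (k+1) + Λ) = ∅ := by
        rw [Set.eq_empty_iff_forall_notMem]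
        rintro s ⟨hsS, hs1, hs2⟩
        rcases le_or_gt s (t k + Λ) with hcase | hcase
        · rw [Set.eq_empty_iff_forall_notMem] at hempty1
          exact hempty1 s ⟨hsS, hs1, hcase⟩
        · exact absurd hs2 (not_le.mpr (hno s hsS (le_of_lt hcase)))
      have hclos : t (k+1) + Λ ∈ closure S := by
        rw [Metric.mem_closure_iff]
        intro ε hε
        obtain ⟨θ, hθmem, hθS⟩ := hhit (t (k+1) + min (ε/2) (Λ/2))
        have hmin0 : 0 < min (ε/2) (Λ/2) := lt_min (half_pos hε) (half_pos hΛ0)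
        have hθgt : t (k+1) + Λ < θ := by
          by_contra hle
          push_neg at hle
          rw [Set.eq_empty_iff_forall_notMem] at hempty2
          exact hempty2 θ ⟨hθS, by linarith [hθmem.1], hle⟩
        refine ⟨θ, hθS, ?_⟩
        rw [Real.dist_eq, abs_of_nonpos (by linarith)]
        have h2 := hθmem.2
        have h3 : min (ε/2) (Λ/2) ≤ ε/2 := min_le_left _ _
        linarith
      rw [hSclosed.closure_eq] at hclos
      rw [Set.eq_empty_iff_forall_notMem] at hempty2
      exact hempty2 (t (k+1) + Λ) ⟨hclos, by linarith, le_refl _⟩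
    obtain ⟨s, hsS, hs1, hs2⟩ := hclaim
    have hfin : s ≤ t (k+2) := by
      have h22 : t (k+2) = sSup (S ∩ Set.Icc (t (k+1)) (t (k+1) + Λ)) := htsucc (k+1)
      rw [h22]
      apply le_csSup (BddAbove.mono Set.inter_subset_right bddAbove_Icc)
      exact ⟨hsS, ⟨by linarith [(htstep k).2], hs2⟩⟩
    linarith
  have hgrowth : ∀ k : ℕ, t 0 + k * Λ ≤ t (2*k) := by
    intro k
    induction k with
    | zero => simp
    | succ k ih =>
      have h1 := htwo (2*k)
      have : 2*(k+1) = 2*k + 2 := by ring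
      rw [this]
      push_cast
      push_cast at ih
      linarith
  -- stopping index
  have hex : ∃ k, t 0 + 2*π - Λ ≤ t k := by
    refine ⟨2*⌈2*π/Λ⌉₊, ?_⟩
    have h1 := hgrowth ⌈2*π/Λ⌉₊
    have h2 : 2*π/Λ ≤ (⌈2*π/Λ⌉₊ : ℝ) := Nat.le_ceil _
    have h3 : 2*π ≤ (⌈2*π/Λ⌉₊ : ℝ) * Λ := by
      rw [div_le_iff₀ hΛ0] at h2
      linarith
    linarith
  set m := Nat.find hex with hm
  have hmspec : t 0 + 2*π - Λ ≤ t m := Nat.find_spec hex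
  have hmmin : ∀ k < m, t k < t 0 + 2*π - Λ := by
    intro k hk
    have := Nat.find_min hex hk
    linarith [not_le.mp this]
  have hm1 : 1 ≤ m := by
    by_contra h
    push_neg at h
    interval_cases m
    · have := hmspec
      linarith [Real.pi_pos, hΛπ]
  have htm_le : t m ≤ t 0 + 2*π := by
    obtain ⟨m', hmeq⟩ : ∃ m', m = m' + 1 := ⟨m - 1, by omega⟩
    have h1 := hmmin m' (by omega)
    have h2 := (htstep m').2
    rw [hmeq]
    linarith
  -- the closed cycle of angles
  set ang : ℕ → ℝ := fun k => if k ≤ m then t k else t 0 + 2*π with hang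
  have hang_le : ∀ k ≤ m, ang k = t k := fun k hk => by rw [hang]; simp [hk]
  have hang_top : ang (m+1) = t 0 + 2*π := by rw [hang]; simp
  have hangS : ∀ k, k ≤ m + 1 → ang k ∈ S := by
    intro k hk
    rcases le_or_gt k m with h | h
    · rw [hang_le k h]; exact htS k
    · have : k = m + 1 := by omega
      rw [this, hang_top]
      exact hper _ ht0mem.1
  have hangmono : ∀ k < m + 1, ang k ≤ ang (k+1) ∧ ang (k+1) - ang k ≤ Λ := by
    intro k hk
    rcases lt_or_ge (k+1) (m+1) with h | h
    · rw [hang_le k (by omega), hang_le (k+1) (by omega)]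
      exact ⟨(htstep k).1, by linarith [(htstep k).2]⟩
    · have hkm : k = m := by omega
      rw [hkm, hang_le m (le_refl m), hang_top]
      exact ⟨htm_le, by linarith [hmspec]⟩
  have hang0 : ang 0 = t 0 := hang_le 0 (by omega)
  have htele : ∑ k ∈ Finset.range (m+1), (ang (k+1) - ang k) = 2*π := by
    rw [Finset.sum_range_sub, hang_top, hang0]
    ring
  -- the covering set
  set K : ℝ := (⌊2*π/Λ⌋₊ : ℝ) * Real.tan (Λ/2) + Real.tan ((2*π - (⌊2*π/Λ⌋₊ : ℝ)*Λ)/2)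
    with hK
  set vv : ℕ → E2 := fun k => (r i / Real.cos ((ang (k+1) - ang k)/2)) •
    uv ((ang k + ang (k+1))/2) with hvv
  set QT : Set E2 := ⋃ k ∈ Finset.range (m+1),
    ((fun y => c i + y) '' Tri (vv k) (r i • uv (ang (k+1)))
      ∪ (fun y => c i + y) '' Tri (vv k) (r i • uv (ang k))) with hQT
  have htri_meas : ∀ (v w : E2), MeasurableSet ((fun y => c i + y) '' Tri v w) := by
    intro v w
    rw [Tri_eq_image]
    have hcomp : IsCompact ((fun y => c i + y) '' ((Gmap v w) '' D2)) :=
      (isCompact_D2.image (Gmap v w).continuous_of_finiteDimensional).image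
        (continuous_const.add continuous_id)
    exact hcomp.measurableSet
  have hQTmeas : MeasurableSet QT := by
    apply Finset.measurableSet_biUnion
    intro k _
    exact (htri_meas _ _).union (htri_meas _ _)
  -- translation invariance of volume
  have htrans : ∀ A : Set E2, volume ((fun y => c i + y) '' A) = volume A := by
    intro A
    have him : (fun y => c i + y) '' A = (fun y => -c i + y) ⁻¹' A := by
      ext z
      simp only [Set.mem_image, Set.mem_preimage]
      constructor
      · rintro ⟨y, hy, rfl⟩
        have : -c i + (c i + y) = y := by abel
        rwa [this]
      · intro hz
        exact ⟨-c i + z, hz, by abel⟩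
    rw [him, measure_preimage_add]
  -- auxiliary : integer-periodicity of uv
  have uv_int_period : ∀ (θ : ℝ) (nn : ℤ), uv (θ + 2*π*nn) = uv θ := by
    intro θ nn
    refine PiLp.ext ?_
    rw [Fin.forall_fin_two]
    constructor
    · rw [uv_apply_zero, uv_apply_zero, show θ + 2*π*nn = θ + nn*(2*π) by ring,
        Real.cos_add_int_mul_two_pi]
    · rw [uv_apply_one, uv_apply_one, show θ + 2*π*nn = θ + nn*(2*π) by ring,
        Real.sin_add_int_mul_two_pi]
  refine ⟨QT, hQTmeas, ?_, ?_, ?_⟩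
  · -- QT is contained in the blown-up ball
    intro x hx
    rw [hQT] at hx
    simp only [Set.mem_iUnion, Set.mem_union] at hx
    obtain ⟨k, hk, hx⟩ := hx
    obtain ⟨hmono, hgap⟩ := hangmono k (Finset.mem_range.mp hk)
    have hγ0 : 0 ≤ (ang (k+1) - ang k)/2 := by linarith
    have hγΛ : (ang (k+1) - ang k)/2 ≤ Λ/2 := by linarith
    have hcosΛ : 0 < Real.cos (Λ/2) :=
      Real.cos_pos_of_mem_Ioo ⟨by linarith [Real.pi_pos], by linarith⟩
    have hcosγ : Real.cos (Λ/2) ≤ Real.cos ((ang (k+1) - ang k)/2) :=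
      Real.cos_le_cos_of_nonneg_of_le_pi hγ0 (by linarith [Real.pi_pos]) hγΛ
    have hcosγ0 : 0 < Real.cos ((ang (k+1) - ang k)/2) := lt_of_lt_of_le hcosΛ hcosγ
    have hnv : ‖vv k‖ ≤ r i / Real.cos (Λ/2) := by
      simp only [hvv]
      rw [norm_smul, norm_uv, mul_one, Real.norm_eq_abs, abs_of_nonneg (by positivity)]
      rw [div_le_div_iff₀ hcosγ0 hcosΛ]
      nlinarith [le_of_lt hri]
    have hnw : ∀ θ, ‖r i • uv θ‖ ≤ r i / Real.cos (Λ/2) := by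
      intro θ
      rw [norm_smul, norm_uv, mul_one, Real.norm_eq_abs, abs_of_nonneg (le_of_lt hri)]
      rw [le_div_iff₀ hcosΛ]
      nlinarith [Real.cos_le_one (Λ/2)]
    have hkey : ∀ w : E2, ‖w‖ ≤ r i / Real.cos (Λ/2) →
        ∀ y ∈ Tri (vv k) w, c i + y ∈ Metric.closedBall (c i) (r i / Real.cos (Λ/2)) := by
      intro w hw y hy
      have := Tri_subset_ball (vv k) w hy
      rw [Metric.mem_closedBall, dist_zero_right] at this
      rw [Metric.mem_closedBall]
      have hd : dist (c i + y) (c i) = ‖y‖ := by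
        rw [dist_eq_norm]
        have : c i + y - c i = y := by abel
        rw [this]
      rw [hd]
      exact le_trans this (max_le hnv hw)
    rcases hx with ⟨y, hy, rfl⟩ | ⟨y, hy, rfl⟩
    · exact hkey _ (hnw _) y hy
    · exact hkey _ (hnw _) y hy
  · -- volume estimate
    rw [hQT]
    refine le_trans (measure_biUnion_finset_le _ _) ?_
    have hterm : ∀ k ∈ Finset.range (m+1),
        volume ((fun y => c i + y) '' Tri (vv k) (r i • uv (ang (k+1)))
          ∪ (fun y => c i + y) '' Tri (vv k) (r i • uv (ang k)))
        ≤ ENNReal.ofReal (r i ^ 2 * Real.tan ((ang (k+1) - ang k)/2)) := by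
      intro k hk
      obtain ⟨hmono, hgap⟩ := hangmono k (Finset.mem_range.mp hk)
      refine le_trans (measure_union_le _ _) ?_
      rw [htrans, htrans]
      have hγnn : (0:ℝ) ≤ r i ^ 2 * Real.tan ((ang (k+1) - ang k)/2) / 2 := by
        apply div_nonneg _ (by norm_num)
        exact mul_nonneg (sq_nonneg _) (tan_nonneg' (by linarith) (by linarith))
      have h1 : volume (Tri (vv k) (r i • uv (ang (k+1))))
          ≤ ENNReal.ofReal (r i ^ 2 * Real.tan ((ang (k+1) - ang k)/2) / 2) := by
        simp only [hvv]
        exact (wedge_vol (r i) (ang k) (ang (k+1)) (le_of_lt hri) hmono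
          (by linarith)).1
      have h2 : volume (Tri (vv k) (r i • uv (ang k)))
          ≤ ENNReal.ofReal (r i ^ 2 * Real.tan ((ang (k+1) - ang k)/2) / 2) := by
        simp only [hvv]
        exact (wedge_vol (r i) (ang k) (ang (k+1)) (le_of_lt hri) hmono
          (by linarith)).2
      calc volume (Tri (vv k) (r i • uv (ang (k+1)))) + volume (Tri (vv k) (r i • uv (ang k)))
          ≤ ENNReal.ofReal (r i ^ 2 * Real.tan ((ang (k+1) - ang k)/2) / 2)
            + ENNReal.ofReal (r i ^ 2 * Real.tan ((ang (k+1) - ang k)/2) / 2) :=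
            add_le_add h1 h2
        _ = ENNReal.ofReal (r i ^ 2 * Real.tan ((ang (k+1) - ang k)/2)) := by
            rw [← ENNReal.ofReal_add hγnn hγnn]
            congr 1
            ring
    refine le_trans (Finset.sum_le_sum hterm) ?_
    have hnn : ∀ k ∈ Finset.range (m+1), 0 ≤ r i ^ 2 * Real.tan ((ang (k+1) - ang k)/2) := by
      intro k hk
      obtain ⟨hmono, hgap⟩ := hangmono k (Finset.mem_range.mp hk)
      apply mul_nonneg (sq_nonneg _)
      exact tan_nonneg' (by linarith) (by linarith)
    rw [← ENNReal.ofReal_sum_of_nonneg hnn]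
    apply ENNReal.ofReal_le_ofReal
    -- the convexity bound
    obtain ⟨m0, hm0⟩ : ∃ m0 : Multiset ℝ,
        m0 = Multiset.map (fun k => ang (k+1) - ang k) (Multiset.range (m+1)) := ⟨_, rfl⟩
    have hsum0 : m0.sum = 2*π := by
      rw [hm0]
      have h1 : (Multiset.map (fun k => ang (k+1) - ang k) (Multiset.range (m+1))).sum
          = ∑ k ∈ Finset.range (m+1), (ang (k+1) - ang k) := by
        rw [Finset.sum_eq_multiset_sum, Finset.range_val]
      rw [h1, htele]
    have hmem0 : ∀ x ∈ m0, 0 ≤ x ∧ x ≤ Λ := by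
      intro x hx
      rw [hm0] at hx
      obtain ⟨k, hk, rfl⟩ := Multiset.mem_map.mp hx
      rw [Multiset.mem_range] at hk
      obtain ⟨hmono, hgap⟩ := hangmono k hk
      exact ⟨by linarith, hgap⟩
    have hmain := multiset_tan_bound Λ hΛ0 hΛπ _ m0 rfl hmem0
    rw [hsum0] at hmain
    have hLHS : ∑ k ∈ Finset.range (m+1), r i ^ 2 * Real.tan ((ang (k+1) - ang k)/2)
        = r i ^ 2 * (m0.map (fun x => Real.tan (x/2))).sum := by
      rw [hm0, Multiset.map_map]
      rw [← Finset.mul_sum]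
      congr 1
    rw [hLHS, hK]
    have h2 : (m0.map (fun x => Real.tan (x/2))).sum
        ≤ (⌊2*π/Λ⌋₊ : ℝ) * Real.tan (Λ/2) + Real.tan ((2*π - (⌊2*π/Λ⌋₊ : ℝ)*Λ)/2) := hmain
    nlinarith [sq_nonneg (r i), h2]
  · -- the covering property
    intro x hx
    by_cases hxc : x = c i
    · rw [hQT]
      simp only [Set.mem_iUnion, Set.mem_union]
      refine ⟨0, Finset.mem_range.mpr (by omega), Or.inl ⟨0, ⟨0, 0, le_refl _, le_refl _,
        by norm_num, by simp⟩, by rw [hxc]; simp⟩⟩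
    · have hv : x - c i ≠ 0 := sub_ne_zero.mpr hxc
      obtain ⟨β₀, hβ₀⟩ := exists_polar (x - c i) hv
      obtain ⟨ℓ, hℓ⟩ : ∃ ℓ : ℤ, ℓ = ⌈(t 0 - β₀) / (2*π)⌉ := ⟨_, rfl⟩
      obtain ⟨β, hβ⟩ : ∃ β : ℝ, β = β₀ + 2*π*ℓ := ⟨_, rfl⟩
      have hπ2 : (0:ℝ) < 2*π := by linarith [Real.pi_pos]
      have hβlow : t 0 ≤ β := by
        have h1 : (t 0 - β₀)/(2*π) ≤ (ℓ:ℝ) := by rw [hℓ]; exact_mod_cast Int.le_ceil _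
        rw [div_le_iff₀ hπ2] at h1
        rw [hβ]
        linarith
      have hβhigh : β < t 0 + 2*π := by
        have h1 : (ℓ:ℝ) < (t 0 - β₀)/(2*π) + 1 := by
          rw [hℓ]; exact_mod_cast Int.ceil_lt_add_one _
        rw [hβ]
        have h2 : (ℓ:ℝ) * (2*π) < ((t 0 - β₀)/(2*π) + 1) * (2*π) := by
          apply mul_lt_mul_of_pos_right h1 hπ2
        rw [add_mul, div_mul_cancel₀ _ (ne_of_gt hπ2)] at h2
        linarith
      have huvβ : uv β = uv β₀ := by rw [hβ]; exact uv_int_period β₀ ℓ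
      have huv2 : x - c i = ‖x - c i‖ • uv β := by rw [huvβ]; exact hβ₀
      obtain ⟨KK, hKK⟩ : ∃ KK, KK = Nat.findGreatest (fun k => ang k ≤ β) (m+1) := ⟨_, rfl⟩
      have hPK : ang KK ≤ β := by
        rw [hKK]
        exact Nat.findGreatest_spec (P := fun k => ang k ≤ β) (by omega : 0 ≤ m+1)
          (by show ang 0 ≤ β; rw [hang0]; exact hβlow)
      have hKKle : KK ≤ m + 1 := by rw [hKK]; exact Nat.findGreatest_le _
      have hKlt : KK < m + 1 := by
        rcases eq_or_lt_of_le hKKle with h | h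
        · exfalso
          rw [h, hang_top] at hPK
          linarith
        · exact h
      have hnext : β ≤ ang (KK + 1) := by
        have hlt : Nat.findGreatest (fun k => ang k ≤ β) (m+1) < KK + 1 := by
          rw [← hKK]
          omega
        have h := Nat.findGreatest_is_greatest hlt (by omega : KK + 1 ≤ m + 1)
        exact le_of_lt (not_le.mp h)
      obtain ⟨hmono, hgap⟩ := hangmono KK hKlt
      have hSa : ang KK ∈ S := hangS KK (by omega)
      have hSb : ang (KK+1) ∈ S := hangS (KK+1) (by omega)
      have hca : ⟪x - c i, uv (ang KK)⟫ ≤ r i := hx _ hSa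
      have hcb : ⟪x - c i, uv (ang (KK+1))⟫ ≤ r i := hx _ hSb
      have hW := wedge_subset hri hmono (by linarith : ang (KK+1) - ang KK < π)
        (norm_nonneg (x - c i)) hPK hnext huv2 hca hcb
      rw [hQT]
      simp only [Set.mem_iUnion, Set.mem_union]
      refine ⟨KK, Finset.mem_range.mpr hKlt, ?_⟩
      rcases hW with h | h
      · exact Or.inl ⟨x - c i, by simp only [hvv]; exact h,
          by show c i + (x - c i) = x; abel⟩
      · exact Or.inr ⟨x - c i, by simp only [hvv]; exact h,
          by show c i + (x - c i) = x; abel⟩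

end Part5D
section Part6

variable (c : ℕ → E2) (r : ℕ → ℝ) (r₀ R₀ : ℝ)

lemma global_cover (hr₀ : 0 < r₀) (hr : ∀ i, r i ∈ Set.Icc r₀ R₀)
    (hpack : Pairwise fun i j => Disjoint (Metric.ball (c i) (r i)) (Metric.ball (c j) (r j)))
    (x : E2) : ∃ i, ∀ θ : ℝ, (∃ j, j ≠ i ∧ dist (c i + r i • uv θ) (c j) ≤ r j) →
      ⟪x - c i, uv θ⟫ ≤ r i := by
  obtain ⟨i, hi⟩ := exists_min_pow c r r₀ R₀ hr₀ hr hpack x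
  refine ⟨i, fun θ h => ?_⟩
  obtain ⟨j, hj, hd⟩ := h
  by_contra hgt
  push_neg at hgt
  have htan := tangency c r r₀ R₀ hr₀ hr hpack hj hd
  have hpos : 0 < r i + r j := by
    have h1 := lt_of_lt_of_le hr₀ (hr i).1
    have h2 := lt_of_lt_of_le hr₀ (hr j).1
    linarith
  have hdes := descent c r htan hpos hgt
  have := hi j
  linarith

lemma vol_ball2 (x : E2) (ρ : ℝ) (hρ : 0 ≤ ρ) :
    volume (Metric.ball x ρ) = ENNReal.ofReal (π * ρ^2) := by
  rw [EuclideanSpace.volume_ball]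
  have hcard : (Fintype.card (Fin 2)) = 2 := by simp
  rw [hcard]
  have h1 : Real.sqrt π ^ 2 = π := Real.sq_sqrt (le_of_lt Real.pi_pos)
  have h2 : Real.Gamma ((2:ℕ) / 2 + 1) = 1 := by
    norm_num [Real.Gamma_two]
  rw [h1, h2, div_one]
  rw [← ENNReal.ofReal_pow hρ, ← ENNReal.ofReal_mul (by positivity)]
  congr 1
  ring

end Part6
section Part7

variable (c : ℕ → E2) (r : ℕ → ℝ) (r₀ R₀ : ℝ)

lemma density_key (hr₀ : 0 < r₀) (hr : ∀ i, r i ∈ Set.Icc r₀ R₀)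
    (hpack : Pairwise fun i j => Disjoint (Metric.ball (c i) (r i)) (Metric.ball (c j) (r j)))
    (Λ : ℝ) (hΛ0 : 0 < Λ) (hΛπ : Λ < π) (K : ℝ) (hK0 : 0 < K)
    (QT : ℕ → Set E2)
    (hsub : ∀ i, QT i ⊆ Metric.closedBall (c i) (r i / Real.cos (Λ/2)))
    (hvol : ∀ i, volume (QT i) ≤ ENNReal.ofReal (K * r i ^ 2))
    (hcov : ∀ x : E2, ∃ i, x ∈ QT i)
    (R : ℝ) (hR : 0 ≤ R) :
    ENNReal.ofReal (π / K) * volume (Metric.ball (0:E2) R)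
      ≤ volume ((⋃ i, Metric.closedBall (c i) (r i))
          ∩ Metric.ball 0 (R + (R₀ / Real.cos (Λ/2) + R₀))) := by
  classical
  have hcos : 0 < Real.cos (Λ/2) :=
    Real.cos_pos_of_mem_Ioo ⟨by linarith [Real.pi_pos], by linarith⟩
  have hR₀ : 0 < R₀ := lt_of_lt_of_le hr₀ (le_trans (hr 0).1 (hr 0).2)
  have hIfin := finite_centers c r r₀ R₀ hr₀ hr hpack 0 (R + R₀ / Real.cos (Λ/2))
  have hstep1 : Metric.ball (0:E2) R ⊆ ⋃ i ∈ hIfin.toFinset, QT i := by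
    intro x hx
    obtain ⟨i, hxi⟩ := hcov x
    have hxc := hsub i hxi
    have hci : c i ∈ Metric.closedBall (0:E2) (R + R₀ / Real.cos (Λ/2)) := by
      rw [Metric.mem_closedBall] at hxc ⊢
      have h1 : dist (c i) 0 ≤ dist (c i) x + dist x 0 := dist_triangle _ _ _
      have h2 : dist (c i) x ≤ r i / Real.cos (Λ/2) := by rw [dist_comm]; exact hxc
      have h3 : dist x 0 < R := Metric.mem_ball.mp hx
      have h4 : r i / Real.cos (Λ/2) ≤ R₀ / Real.cos (Λ/2) :=
        (div_le_div_iff_of_pos_right hcos).mpr (hr i).2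
      linarith
    exact Set.mem_biUnion (hIfin.mem_toFinset.mpr hci) hxi
  have hstep2 : volume (Metric.ball (0:E2) R)
      ≤ ∑ i ∈ hIfin.toFinset, ENNReal.ofReal (K * r i^2) :=
    le_trans (measure_mono hstep1) (le_trans (measure_biUnion_finset_le _ _)
      (Finset.sum_le_sum fun i _ => hvol i))
  have hstep3 : ∀ i, ENNReal.ofReal (K * r i^2)
      = ENNReal.ofReal (K/π) * volume (Metric.ball (c i) (r i)) := by
    intro i
    have hrip : (0:ℝ) ≤ r i := le_of_lt (lt_of_lt_of_le hr₀ (hr i).1)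
    rw [vol_ball2 (c i) (r i) hrip,
      ← ENNReal.ofReal_mul (div_nonneg (le_of_lt hK0) (le_of_lt Real.pi_pos))]
    congr 1
    field_simp
  have hdisj : (↑hIfin.toFinset : Set ℕ).Pairwise
      (Function.onFun Disjoint fun i => Metric.ball (c i) (r i)) :=
    fun i _ j _ hij => hpack hij
  have hstep4 : ∑ i ∈ hIfin.toFinset, volume (Metric.ball (c i) (r i))
      = volume (⋃ i ∈ hIfin.toFinset, Metric.ball (c i) (r i)) :=
    (measure_biUnion_finset hdisj fun i _ => measurableSet_ball).symm
  have hstep5 : (⋃ i ∈ hIfin.toFinset, Metric.ball (c i) (r i))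
      ⊆ (⋃ i, Metric.closedBall (c i) (r i))
        ∩ Metric.ball 0 (R + (R₀ / Real.cos (Λ/2) + R₀)) := by
    intro y hy
    simp only [Set.mem_iUnion] at hy
    obtain ⟨i, hiI, hyi⟩ := hy
    constructor
    · exact Set.mem_iUnion.mpr ⟨i, Metric.ball_subset_closedBall hyi⟩
    · have h1 : dist y 0 ≤ dist y (c i) + dist (c i) 0 := dist_triangle _ _ _
      have h2 : dist y (c i) < r i := Metric.mem_ball.mp hyi
      have h3 : dist (c i) 0 ≤ R + R₀ / Real.cos (Λ/2) :=
        Metric.mem_closedBall.mp (hIfin.mem_toFinset.mp hiI)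
      have h4 : r i ≤ R₀ := (hr i).2
      rw [Metric.mem_ball]
      linarith
  have hone : ENNReal.ofReal (π/K) * ENNReal.ofReal (K/π) = 1 := by
    rw [← ENNReal.ofReal_mul (div_nonneg (le_of_lt Real.pi_pos) (le_of_lt hK0))]
    rw [show π/K * (K/π) = 1 by field_simp]
    exact ENNReal.ofReal_one
  calc ENNReal.ofReal (π / K) * volume (Metric.ball (0:E2) R)
      ≤ ENNReal.ofReal (π / K) * ∑ i ∈ hIfin.toFinset, ENNReal.ofReal (K * r i^2) :=
        mul_le_mul_right hstep2 _
    _ = ENNReal.ofReal (π / K) * (ENNReal.ofReal (K/π)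
          * ∑ i ∈ hIfin.toFinset, volume (Metric.ball (c i) (r i))) := by
        congr 1
        rw [Finset.mul_sum]
        exact Finset.sum_congr rfl fun i _ => hstep3 i
    _ = ∑ i ∈ hIfin.toFinset, volume (Metric.ball (c i) (r i)) := by
        rw [← mul_assoc, hone, one_mul]
    _ = volume (⋃ i ∈ hIfin.toFinset, Metric.ball (c i) (r i)) := hstep4
    _ ≤ _ := measure_mono hstep5

end Part7
/-- L. Fejes Tóth's stability theorem: in a stable packing of the plane by circles with
radii bounded between positive constants, if `Λ` is the instability (every boundary arc
of central angle exceeding `Λ` contains a contact point) then the lower density `d`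
satisfies `d ≥ π / (n tan(Λ/2) + tan((2π − nΛ)/2))`, where `n = ⌊2π/Λ⌋`. -/
theorem stable_packing_density (c : ℕ → EuclideanSpace ℝ (Fin 2)) (r : ℕ → ℝ)
    (r₀ R₀ : ℝ) (hr₀ : 0 < r₀) (hr : ∀ i, r i ∈ Set.Icc r₀ R₀)
    (hpack : Pairwise fun i j => Disjoint (Metric.ball (c i) (r i)) (Metric.ball (c j) (r j)))
    (Λ : ℝ) (hΛ0 : 0 < Λ) (hΛπ : Λ < π)
    (pt : ℕ → ℝ → EuclideanSpace ℝ (Fin 2))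
    (hpt : ∀ i θ j, pt i θ j = c i j + r i * (if j = 0 then Real.cos θ else Real.sin θ))
    -- instability at most `Λ`: every arc of angular width greater than `Λ` on the
    -- boundary of a disk contains a point of contact with another disk
    (hstab : ∀ i, ∀ α : ℝ, ∀ ε > 0, ∃ θ ∈ Set.Icc α (α + Λ + ε),
      ∃ j, j ≠ i ∧ pt i θ ∈ Metric.closedBall (c j) (r j))
    (n : ℕ) (hn : n = ⌊2 * π / Λ⌋₊) (d : ℝ≥0∞)
    (hd : d = Filter.liminf
      (fun R : ℝ => volume ((⋃ i, Metric.closedBall (c i) (r i)) ∩ Metric.ball 0 R) /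
        volume (Metric.ball (0 : EuclideanSpace ℝ (Fin 2)) R)) Filter.atTop) :
    ENNReal.ofReal (π / (n * Real.tan (Λ / 2) + Real.tan ((2 * π - n * Λ) / 2))) ≤ d := by
  classical
  have hπ := Real.pi_pos
  have hpt' : ∀ i θ, pt i θ = c i + r i • uv θ := by
    intro i θ
    refine PiLp.ext ?_
    rw [Fin.forall_fin_two]
    constructor
    · rw [hpt i θ 0]
      simp [PiLp.add_apply, PiLp.smul_apply, uv_apply_zero]
    · rw [hpt i θ 1]
      simp [PiLp.add_apply, PiLp.smul_apply, uv_apply_one]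
  have hstab' : ∀ i, ∀ α : ℝ, ∀ ε > 0, ∃ θ ∈ Set.Icc α (α + Λ + ε),
      ∃ j, j ≠ i ∧ dist (c i + r i • uv θ) (c j) ≤ r j := by
    intro i α ε hε
    obtain ⟨θ, hmem, j, hj, hmemB⟩ := hstab i α ε hε
    refine ⟨θ, hmem, j, hj, ?_⟩
    rw [← hpt' i θ]
    exact Metric.mem_closedBall.mp hmemB
  have hR₀ : 0 < R₀ := lt_of_lt_of_le hr₀ (le_trans (hr 0).1 (hr 0).2)
  have hcos : 0 < Real.cos (Λ/2) :=
    Real.cos_pos_of_mem_Ioo ⟨by linarith, by linarith⟩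
  have h2πΛ : 0 < 2*π/Λ := by positivity
  have hnle : (n:ℝ) ≤ 2*π/Λ := by
    rw [hn]
    exact_mod_cast Nat.floor_le (le_of_lt h2πΛ)
  have hnlt : 2*π/Λ < (n:ℝ) + 1 := by
    rw [hn]
    push_cast
    exact Nat.lt_floor_add_one _
  have hrem0 : 0 ≤ 2*π - n*Λ := by
    have h1 : (n:ℝ) * Λ ≤ 2*π := (le_div_iff₀ hΛ0).mp hnle
    linarith
  have hremΛ : 2*π - n*Λ < Λ := by
    have h1 : 2*π < ((n:ℝ) + 1) * Λ := (div_lt_iff₀ hΛ0).mp hnlt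
    nlinarith
  have htanpos : 0 < Real.tan (Λ/2) :=
    Real.tan_pos_of_pos_of_lt_pi_div_two (by linarith) (by linarith)
  have htannn : 0 ≤ Real.tan ((2*π - n*Λ)/2) := tan_nonneg' (by linarith) (by linarith)
  have hn1 : 1 ≤ (n:ℝ) := by
    rw [hn]
    have h1 : (1:ℕ) ≤ ⌊2*π/Λ⌋₊ := by
      apply Nat.le_floor
      push_cast
      rw [le_div_iff₀ hΛ0]
      linarith
    exact_mod_cast h1
  have hK0 : 0 < (n:ℝ) * Real.tan (Λ/2) + Real.tan ((2*π - n*Λ)/2) := by nlinarith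
  set K := (n:ℝ) * Real.tan (Λ/2) + Real.tan ((2*π - n*Λ)/2) with hKdef
  have hdc := fun i => disk_cover c r r₀ R₀ hr₀ hr hpack Λ hΛ0 hΛπ i (hstab' i)
  choose QT hQTmeas hQTsub hQTvol hQTcov using hdc
  have hQTvol' : ∀ i, volume (QT i) ≤ ENNReal.ofReal (K * r i ^ 2) := by
    intro i
    have h := hQTvol i
    rw [← hn] at h
    exact h
  have hcov : ∀ x : E2, ∃ i, x ∈ QT i := by
    intro x
    obtain ⟨i, hi⟩ := global_cover c r r₀ R₀ hr₀ hr hpack x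
    exact ⟨i, hQTcov i x hi⟩
  set M := R₀ / Real.cos (Λ/2) + R₀ with hM
  have hM0 : 0 < M := by
    have h1 : 0 < R₀ / Real.cos (Λ/2) := div_pos hR₀ hcos
    rw [hM]
    linarith
  have hkey : ∀ R' : ℝ, M + 1 ≤ R' →
      ENNReal.ofReal (π / K) * volume (Metric.ball (0:E2) (R' - M))
        / volume (Metric.ball (0:E2) R')
      ≤ volume ((⋃ i, Metric.closedBall (c i) (r i)) ∩ Metric.ball 0 R')
        / volume (Metric.ball (0:E2) R') := by
    intro R' hR'
    apply ENNReal.div_le_div_right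
    have h := density_key c r r₀ R₀ hr₀ hr hpack Λ hΛ0 hΛπ K hK0 QT hQTsub hQTvol' hcov
      (R' - M) (by linarith)
    rw [← hM, sub_add_cancel] at h
    exact h
  have hEq : ∀ᶠ R' in Filter.atTop, ENNReal.ofReal (π / K)
      * volume (Metric.ball (0:E2) (R' - M)) / volume (Metric.ball (0:E2) R')
      = ENNReal.ofReal (π / K) * ENNReal.ofReal ((1 - M/R')^2) := by
    filter_upwards [Filter.eventually_ge_atTop (M+1)] with R' hR'
    have hR'0 : 0 < R' := by linarith
    have hRM : 0 ≤ R' - M := by linarith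
    rw [vol_ball2 _ _ hRM, vol_ball2 _ _ (le_of_lt hR'0)]
    rw [mul_div_assoc]
    congr 1
    rw [← ENNReal.ofReal_div_of_pos (by positivity)]
    congr 1
    field_simp
  have ht1 : Filter.Tendsto (fun R' : ℝ => M / R') Filter.atTop (nhds 0) :=
    Filter.Tendsto.div_atTop tendsto_const_nhds Filter.tendsto_id
  have ht2 : Filter.Tendsto (fun R' : ℝ => (1 - M/R')^2) Filter.atTop (nhds 1) := by
    have h := (Filter.Tendsto.sub (tendsto_const_nhds (x := (1:ℝ))) ht1).pow 2
    norm_num at h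
    exact h
  have ht3 : Filter.Tendsto (fun R' : ℝ => ENNReal.ofReal ((1 - M/R')^2)) Filter.atTop
      (nhds (ENNReal.ofReal 1)) := (ENNReal.continuous_ofReal.tendsto 1).comp ht2
  rw [ENNReal.ofReal_one] at ht3
  have ht4 := ENNReal.Tendsto.const_mul (a := ENNReal.ofReal (π / K)) ht3 (Or.inl one_ne_zero)
  rw [mul_one] at ht4
  have hGlim : Filter.Tendsto (fun R' : ℝ => ENNReal.ofReal (π / K)
      * volume (Metric.ball (0:E2) (R' - M)) / volume (Metric.ball (0:E2) R'))
      Filter.atTop (nhds (ENNReal.ofReal (π / K))) := by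
    have hEq2 : (fun R' : ℝ => ENNReal.ofReal (π / K) * ENNReal.ofReal ((1 - M/R')^2))
        =ᶠ[Filter.atTop] (fun R' : ℝ => ENNReal.ofReal (π / K)
          * volume (Metric.ball (0:E2) (R' - M)) / volume (Metric.ball (0:E2) R')) := by
      filter_upwards [hEq] with R' h
      exact h.symm
    exact Filter.Tendsto.congr' hEq2 ht4
  rw [hd]
  calc ENNReal.ofReal (π / K)
      = Filter.liminf (fun R' : ℝ => ENNReal.ofReal (π / K)
          * volume (Metric.ball (0:E2) (R' - M)) / volume (Metric.ball (0:E2) R'))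
          Filter.atTop := hGlim.liminf_eq.symm
    _ ≤ _ := Filter.liminf_le_liminf (Filter.eventually_atTop.mpr ⟨M+1, hkey⟩)
end StablePacking
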